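/- Let |C⟩ = (√ρ ⊗ I)|Ω⟩ and |D⟩ = (√σ ⊗ I)|Ω⟩ for real positive semidefinite density matrices ρ, σ, and let W = sgn(√σ √ρ). Then ⟨D|(I ⊗ W)|C⟩ = F(ρ,σ) = Tr √(ρ^{1/2} σ ρ^{1/2}). -/

import Mathlib

open Matrix Kronecker
open scoped ComplexOrder

noncomputable section
attribute [local instance] Classical.propDecidable

/-- Moore–Penrose pseudoinverse of a square complex matrix. -/
def pinv {n : Type*} [Fintype n] [DecidableEq n] (A : Matrix n n ℂ) : Matrix n n ℂ :=
  if h : ∃ B : Matrix n n ℂ,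
      A * B * A = A ∧ B * A * B = B ∧ (A * B)ᴴ = A * B ∧ (B * A)ᴴ = B * A
  then h.choose else 0

/-- Positive semidefinite square root (junk value `0` if the matrix is not PSD). -/
def msqrt {n : Type*} [Fintype n] [DecidableEq n] (A : Matrix n n ℂ) : Matrix n n ℂ :=
  if h : A.PosSemidef then (h.1.eigenvectorUnitary : Matrix n n ℂ) *
    diagonal ((↑) ∘ Real.sqrt ∘ h.1.eigenvalues) * (star h.1.eigenvectorUnitary : Matrix n n ℂ)
    else 0

/-- `sgn(X) = U sgn(Σ) V*` for an SVD `X = U Σ V*`; equivalently `X (X* X)^{-1/2}`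
with the Moore–Penrose pseudoinverse. -/
def msgn {n : Type*} [Fintype n] [DecidableEq n] (X : Matrix n n ℂ) : Matrix n n ℂ :=
  X * pinv (msqrt (Xᴴ * X))

/-- Matrix geometric mean `A # B = A^{1/2} (A^{-1/2} B A^{-1/2})^{1/2} A^{1/2}`
(with Moore–Penrose pseudoinverses). -/
def geo {n : Type*} [Fintype n] [DecidableEq n] (A B : Matrix n n ℂ) : Matrix n n ℂ :=
  msqrt A * msqrt (pinv (msqrt A) * B * pinv (msqrt A)) * msqrt A

/-- The unnormalized maximally entangled state `|Ω⟩ = ∑ i, |i⟩ ⊗ |i⟩`. -/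
def omegaVec (d : ℕ) : Fin d × Fin d → ℂ := fun p => if p.1 = p.2 then 1 else 0

/-- Reduced density matrix of `|C⟩⟨C|` on the first subsystem
(partial trace over the second subsystem). -/
def reducedA {d : ℕ} (C : Fin d × Fin d → ℂ) : Matrix (Fin d) (Fin d) ℂ :=
  Matrix.of fun i j => ∑ k, C (i, k) * star (C (j, k))

/-- Partial trace over the first subsystem of the operator `|D⟩⟨C|`. -/
def trA {d : ℕ} (D C : Fin d × Fin d → ℂ) : Matrix (Fin d) (Fin d) ℂ :=
  Matrix.of fun j l => ∑ i, D (i, j) * star (C (i, l))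

/-- `ℓ²→ℓ²` operator norm (largest singular value). -/
def opNorm {n : Type*} [Fintype n] [DecidableEq n] (A : Matrix n n ℂ) : ℝ :=
  ‖(Matrix.toEuclideanCLM (𝕜 := ℂ) A : EuclideanSpace ℂ n →L[ℂ] EuclideanSpace ℂ n)‖

/-- `P` is the orthogonal projection onto the image (column space) of `A`. -/
def IsOrthProjOnto {n : Type*} [Fintype n] [DecidableEq n] (P A : Matrix n n ℂ) : Prop :=
  Pᴴ = P ∧ P * P = P ∧ LinearMap.range P.mulVecLin = LinearMap.range A.mulVecLin

/-- `η` is the smallest nonzero eigenvalue of the Hermitian matrix `M`. -/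
def IsSmallestNonzeroEigenvalue {n : Type*} [Fintype n] [DecidableEq n]
    (M : Matrix n n ℂ) (η : ℝ) : Prop :=
  ∃ hM : M.IsHermitian, η ≠ 0 ∧ (∃ i, hM.eigenvalues i = η) ∧
    ∀ i, hM.eigenvalues i ≠ 0 → η ≤ hM.eigenvalues i

open scoped MatrixOrder

lemma exists_pinv {n : Type*} [Fintype n] [DecidableEq n] {A : Matrix n n ℂ}
    (hA : A.IsHermitian) :
    ∃ B : Matrix n n ℂ,
      A * B * A = A ∧ B * A * B = B ∧ (A * B)ᴴ = A * B ∧ (B * A)ᴴ = B * A := by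
  set U : Matrix n n ℂ := (hA.eigenvectorUnitary : Matrix n n ℂ) with hU
  have hUU' : star U * U = 1 := Unitary.coe_star_mul_self hA.eigenvectorUnitary
  have key : ∀ f g : n → ℂ, (U * diagonal f * star U) * (U * diagonal g * star U)
      = U * diagonal (f * g) * star U := by
    intro f g
    have h1 : star U * (U * (diagonal g * star U)) = diagonal g * star U := by
      rw [← Matrix.mul_assoc, hUU', Matrix.one_mul]
    calc (U * diagonal f * star U) * (U * diagonal g * star U)
        = U * (diagonal f * (star U * (U * (diagonal g * star U)))) := by
          simp only [Matrix.mul_assoc]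
      _ = U * (diagonal f * (diagonal g * star U)) := by rw [h1]
      _ = U * diagonal (f * g) * star U := by
          rw [← Matrix.mul_assoc (diagonal f), diagonal_mul_diagonal]
          simp only [Matrix.mul_assoc]
          rfl
  have keyH : ∀ f : n → ℂ, (U * diagonal f * star U)ᴴ = U * diagonal (star f) * star U := by
    intro f
    simp only [conjTranspose_mul, diagonal_conjTranspose, star_eq_conjTranspose,
      conjTranspose_conjTranspose, Matrix.mul_assoc]
  set dvec : n → ℂ := fun i => (hA.eigenvalues i : ℂ) with hd
  have hAeq : A = U * diagonal dvec * star U := by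
    exact hA.spectral_theorem
  have hv1 : (dvec * dvec⁻¹) * dvec = dvec := by
    funext i
    rcases eq_or_ne (dvec i) 0 with h | h
    · simp [h]
    · simp only [Pi.mul_apply, Pi.inv_apply]
      field_simp
  have hv2 : (dvec⁻¹ * dvec) * dvec⁻¹ = dvec⁻¹ := by
    funext i
    rcases eq_or_ne (dvec i) 0 with h | h
    · simp [h]
    · simp only [Pi.mul_apply, Pi.inv_apply]
      field_simp
  have hstar : ∀ v : n → ℂ, (∀ i, star (v i) = v i) → star v = v := fun v h => funext h
  have hsd : star (dvec * dvec⁻¹) = dvec * dvec⁻¹ := by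
    funext i
    simp [hd, ← Complex.ofReal_inv, ← Complex.ofReal_mul]
  have hsd' : star (dvec⁻¹ * dvec) = dvec⁻¹ * dvec := by
    funext i
    simp [hd, ← Complex.ofReal_inv, ← Complex.ofReal_mul]
  refine ⟨U * diagonal dvec⁻¹ * star U, ?_, ?_, ?_, ?_⟩
  · rw [hAeq, key, key, hv1]
  · rw [hAeq, key, key, hv2]
  · rw [hAeq, key, keyH, hsd]
  · rw [hAeq, key, keyH, hsd']

lemma trace_sq_pinv {n : Type*} [Fintype n] [DecidableEq n] {S : Matrix n n ℂ}
    (hS : S.IsHermitian) : (S * S * pinv S).trace = S.trace := by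
  have hex := exists_pinv hS
  have hpinv : pinv S = hex.choose := dif_pos hex
  obtain ⟨h1, -, -, -⟩ := hex.choose_spec
  rw [hpinv, Matrix.mul_assoc, trace_mul_comm, h1]

lemma msqrt_of_posSemidef {n : Type*} [Fintype n] [DecidableEq n] {A : Matrix n n ℂ}
    (hA : A.PosSemidef) : msqrt A = CFC.sqrt A := by
  rw [msqrt, dif_pos hA, CFC.sqrt_eq_cfc, cfc_nnreal_eq_real _ A, hA.1.cfc_eq, IsHermitian.cfc,
    Unitary.conjStarAlgAut_apply]
  congr 3
  funext x
  simp only [Function.comp_apply]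
  rw [Real.sqrt.eq_1]
  rfl

lemma msqrt_transpose_self {n : Type*} [Fintype n] [DecidableEq n] {A : Matrix n n ℂ}
    (hA : A.PosSemidef) (hreal : A.map star = A) : (msqrt A)ᵀ = msqrt A := by
  rw [msqrt_of_posSemidef hA]
  have hAt : Aᵀ = A := by
    ext i j
    have h1 : star (A i j) = A i j := Matrix.ext_iff.mpr hreal i j
    have h2 := congrFun (congrFun hA.1 j) i
    rw [conjTranspose_apply] at h2
    rw [transpose_apply, ← h2, h1]
  have hsq : (CFC.sqrt A)ᵀ ^ 2 = A := by
    rw [pow_two, ← transpose_mul, CFC.sqrt_mul_sqrt_self A hA.nonneg, hAt]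
  exact (CFC.sqrt_unique (by rw [← pow_two]; exact hsq)
    (CFC.sqrt_nonneg A).posSemidef.transpose.nonneg).symm

lemma msqrt_real {n : Type*} [Fintype n] [DecidableEq n] {A : Matrix n n ℂ}
    (hA : A.PosSemidef) (hreal : A.map star = A) :
    ∀ i j, star (msqrt A i j) = msqrt A i j := by
  intro i j
  have h1 : (msqrt A)ᴴ = msqrt A := by rw [msqrt_of_posSemidef hA]; exact (CFC.sqrt_nonneg A).posSemidef.1
  have h2 := msqrt_transpose_self hA hreal
  calc star (msqrt A i j) = (msqrt A)ᴴ j i := by rw [conjTranspose_apply]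
    _ = msqrt A j i := by rw [h1]
    _ = (msqrt A)ᵀ i j := rfl
    _ = msqrt A i j := by rw [h2]

lemma kron_one_omega (d : ℕ) (M : Matrix (Fin d) (Fin d) ℂ) :
    (M ⊗ₖ (1 : Matrix (Fin d) (Fin d) ℂ)).mulVec (omegaVec d) = fun p => M p.1 p.2 := by
  funext p
  simp [mulVec, dotProduct, omegaVec, Fintype.sum_prod_type, one_apply,
    mul_ite, ite_mul, Finset.sum_ite_eq, Finset.sum_ite_eq']

lemma one_kron_vec (d : ℕ) (A W : Matrix (Fin d) (Fin d) ℂ) :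
    ((1 : Matrix (Fin d) (Fin d) ℂ) ⊗ₖ W).mulVec (fun p => A p.1 p.2)
      = fun p => (A * Wᵀ) p.1 p.2 := by
  funext p
  simp [mulVec, dotProduct, Fintype.sum_prod_type, one_apply, mul_apply,
    mul_ite, ite_mul, Finset.sum_ite_eq, Finset.sum_ite_eq', mul_comm]

theorem canonical_uhlmann_achieves_fidelity (d : ℕ)
    (ρ σ : Matrix (Fin d) (Fin d) ℂ)
    (hρ : ρ.PosSemidef) (hσ : σ.PosSemidef)
    (hρreal : ρ.map star = ρ) (hσreal : σ.map star = σ)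
    (hρtr : ρ.trace = 1) (hσtr : σ.trace = 1) :
    star ((msqrt σ ⊗ₖ (1 : Matrix (Fin d) (Fin d) ℂ)).mulVec (omegaVec d)) ⬝ᵥ
        (((1 : Matrix (Fin d) (Fin d) ℂ) ⊗ₖ msgn (msqrt σ * msqrt ρ)).mulVec
          ((msqrt ρ ⊗ₖ (1 : Matrix (Fin d) (Fin d) ℂ)).mulVec (omegaVec d)))
      = (msqrt (msqrt ρ * σ * msqrt ρ)).trace := by
  set A := msqrt ρ with hA
  set B := msqrt σ with hB
  set X := B * A with hX
  set W := msgn X with hW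
  have hAr := msqrt_real hρ hρreal
  have hBr := msqrt_real hσ hσreal
  have hAH : Aᴴ = A := by rw [hA, msqrt_of_posSemidef hρ]; exact (CFC.sqrt_nonneg ρ).posSemidef.1
  have hBH : Bᴴ = B := by rw [hB, msqrt_of_posSemidef hσ]; exact (CFC.sqrt_nonneg σ).posSemidef.1
  have hBB : B * B = σ := by rw [hB, msqrt_of_posSemidef hσ]; exact CFC.sqrt_mul_sqrt_self σ hσ.nonneg
  have hXreal : ∀ i j, star (X i j) = X i j := by
    intro i j
    simp only [hX, mul_apply, star_sum, star_mul']
    exact Finset.sum_congr rfl fun k _ => by rw [hBr i k, hAr k j]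
  have hXt : Xᵀ = Xᴴ := by
    ext i j
    rw [transpose_apply, conjTranspose_apply, hXreal j i]
  have hXX : Xᴴ * X = A * σ * A := by
    rw [hX, conjTranspose_mul, hAH, hBH, Matrix.mul_assoc A B (B * A),
      ← Matrix.mul_assoc B B A, hBB, ← Matrix.mul_assoc]
  have hpsd : (Xᴴ * X).PosSemidef := posSemidef_conjTranspose_mul_self X
  have hSS : msqrt (Xᴴ * X) * msqrt (Xᴴ * X) = Xᴴ * X := by
    rw [msqrt_of_posSemidef hpsd]; exact CFC.sqrt_mul_sqrt_self _ hpsd.nonneg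
  have hSherm : (msqrt (Xᴴ * X)).IsHermitian := by
    rw [msqrt_of_posSemidef hpsd]; exact (CFC.sqrt_nonneg (Xᴴ * X)).posSemidef.1
  rw [kron_one_omega d B, kron_one_omega d A, one_kron_vec d A W]
  have hBstar : ∀ i j, star (B i j) = B j i := by
    intro i j
    have h := conjTranspose_apply B i j
    rw [hBH] at h
    exact h.symm
  calc star (fun p : Fin d × Fin d => B p.1 p.2) ⬝ᵥ (fun p => (A * Wᵀ) p.1 p.2)
      = ∑ i, ∑ j, star (B i j) * (A * Wᵀ) i j := by
        simp [dotProduct, Fintype.sum_prod_type]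
    _ = ∑ i, ∑ j, B j i * (A * Wᵀ) i j := by
        refine Finset.sum_congr rfl fun i _ => Finset.sum_congr rfl fun j _ => ?_
        rw [hBstar i j]
    _ = ∑ j, ∑ i, B j i * (A * Wᵀ) i j := Finset.sum_comm
    _ = (B * (A * Wᵀ)).trace := by simp [trace, mul_apply, diag]
    _ = (X * Wᵀ).trace := by rw [← Matrix.mul_assoc, ← hX]
    _ = ((X * Wᵀ)ᵀ).trace := (trace_transpose _).symm
    _ = (Xᵀ * W).trace := by rw [transpose_mul, transpose_transpose, trace_mul_comm]
    _ = (msqrt (Xᴴ * X) * msqrt (Xᴴ * X) * pinv (msqrt (Xᴴ * X))).trace := by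
        rw [hXt, hW, msgn, ← Matrix.mul_assoc, hSS]
    _ = (msqrt (Xᴴ * X)).trace := trace_sq_pinv hSherm
    _ = (msqrt (A * σ * A)).trace := by rw [hXX]
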